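/- arXiv:1912.05498 — 4 statements merged into one kernel-verified Lean document; each statement's English description precedes it below -/
import Mathlib

section
/- For an irrational x ∈ [0,1], x lies in the Cantor set C_B if and only if F_B(x) is irrational. -/
open MeasureTheory Set
open scoped ENNReal

namespace CantorAux

lemma meas_f (N : ℕ) (d : ℕ) : Measurable (fun x : ℝ => (x + (d : ℝ)) / N) :=
  (measurable_id.add_const _).div_const _

lemma preimage_Iic {N : ℕ} (hN : 0 < (N:ℝ)) (d : ℕ) (y : ℝ) :
    (fun x : ℝ => (x + (d:ℝ)) / N) ⁻¹' Iic y = Iic ((N:ℝ)*y - d) := by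
  ext t
  simp only [mem_preimage, mem_Iic, div_le_iff₀ hN]
  constructor <;> intro h <;> nlinarith [mul_comm y (N:ℝ)]

lemma preimage_Icc {N : ℕ} (hN : 0 < (N:ℝ)) (d : ℕ) (a b : ℝ) :
    (fun x : ℝ => (x + (d:ℝ)) / N) ⁻¹' Icc a b = Icc ((N:ℝ)*a - d) ((N:ℝ)*b - d) := by
  ext t
  simp only [mem_preimage, mem_Icc, le_div_iff₀ hN, div_le_iff₀ hN]
  constructor <;> intro h <;> constructor <;>
    nlinarith [mul_comm a (N:ℝ), mul_comm b (N:ℝ), h.1, h.2]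

lemma hinv_apply {N : ℕ} {D : Finset ℕ} {μ : Measure ℝ}
    (hinv : μ = (D.card : ℝ≥0∞)⁻¹ • ∑ d ∈ D, μ.map (fun x : ℝ => (x + (d : ℝ)) / N))
    (s : Set ℝ) (hs : MeasurableSet s) :
    μ s = (D.card : ℝ≥0∞)⁻¹ * ∑ d ∈ D, μ ((fun x : ℝ => (x + (d:ℝ)) / N) ⁻¹' s) := by
  conv_lhs => rw [hinv]
  rw [Measure.smul_apply, Measure.finset_sum_apply, smul_eq_mul]
  congr 1
  exact Finset.sum_congr rfl fun d _ => Measure.map_apply (meas_f N d) hs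

lemma term_le {N : ℕ} {D : Finset ℕ} {μ : Measure ℝ}
    (hinv : μ = (D.card : ℝ≥0∞)⁻¹ • ∑ d ∈ D, μ.map (fun x : ℝ => (x + (d : ℝ)) / N))
    {d : ℕ} (hd : d ∈ D) (s : Set ℝ) (hs : MeasurableSet s) :
    (D.card : ℝ≥0∞)⁻¹ * μ ((fun x : ℝ => (x + (d:ℝ)) / N) ⁻¹' s) ≤ μ s := by
  rw [hinv_apply hinv s hs]
  have h := Finset.single_le_sum (s := D)
    (f := fun e : ℕ => μ ((fun x : ℝ => (x + (e:ℝ)) / N) ⁻¹' s)) (fun i _ => zero_le) hd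
  exact mul_le_mul_right h _

lemma meas_inter_C {C : Set ℝ} {μ : Measure ℝ} [IsProbabilityMeasure μ]
    (hCmeas : MeasurableSet C) (hsupp : μ C = 1) (s : Set ℝ) :
    μ s = μ (s ∩ C) := by
  have hcompl : μ Cᶜ = 0 := by
    have := measure_compl hCmeas (measure_ne_top μ C)
    simp [hsupp] at this; simpa using this
  have h1 : μ (s ∩ C) + μ (s \ C) = μ s := measure_inter_add_diff s hCmeas
  have h2 : μ (s \ C) = 0 :=
    le_antisymm (le_trans (measure_mono (diff_subset_compl s C)) hcompl.le) zero_le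
  rw [← h1, h2, add_zero]

lemma Fe_one {C : Set ℝ} {μ : Measure ℝ} [IsProbabilityMeasure μ]
    (hCsub : C ⊆ Set.Icc 0 1) (hsupp : μ C = 1) {t : ℝ} (ht : 1 ≤ t) :
    μ (Iic t) = 1 := by
  refine le_antisymm prob_le_one ?_
  rw [← hsupp]
  exact measure_mono fun c hc => le_trans (hCsub hc).2 ht

lemma Fe_zero {C : Set ℝ} {μ : Measure ℝ} [IsProbabilityMeasure μ]
    (hCmeas : MeasurableSet C) (hCsub : C ⊆ Set.Icc 0 1) (hsupp : μ C = 1)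
    {t : ℝ} (ht : t < 0) : μ (Iic t) = 0 := by
  rw [meas_inter_C hCmeas hsupp]
  convert measure_empty (μ := μ)
  ext c
  simp only [mem_inter_iff, mem_Iic, mem_empty_iff_false, iff_false, not_and]
  intro hc hcC
  exact absurd ((hCsub hcC).1.trans hc) (not_le.2 ht)

lemma gap_lemma {N : ℕ} {D : Finset ℕ} {C : Set ℝ} {μ : Measure ℝ} [IsProbabilityMeasure μ]
    (hN : 3 ≤ N)
    (hCne : C.Nonempty) (hCsub : C ⊆ Set.Icc 0 1) (hCmeas : MeasurableSet C)
    (hCattr : C = ⋃ d ∈ D, (fun x : ℝ => (x + (d : ℝ)) / N) '' C)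
    (hsupp : μ C = 1)
    (hinv : μ = (D.card : ℝ≥0∞)⁻¹ • ∑ d ∈ D, μ.map (fun x : ℝ => (x + (d : ℝ)) / N)) :
    ∀ (k : ℕ) (x : ℝ), (Set.Ioo (x - ((N:ℝ))⁻¹^k) (x + ((N:ℝ))⁻¹^k) ∩ C = ∅) →
      ∃ j : ℕ, μ (Iic x) = (j : ℝ≥0∞) * ((D.card : ℝ≥0∞)⁻¹)^k := by
  have hN0 : (0:ℝ) < N := by positivity
  have hfC : ∀ d ∈ D, ∀ c ∈ C, ((c + d) / N : ℝ) ∈ C := by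
    intro d hd c hc
    rw [hCattr]
    exact mem_iUnion₂.2 ⟨d, hd, c, hc, rfl⟩
  intro k
  induction k with
  | zero =>
    intro x hx
    simp only [pow_zero] at hx
    obtain ⟨c₀, hc₀⟩ := hCne
    have hnot : ∀ c ∈ C, c ≤ x - 1 ∨ x + 1 ≤ c := by
      intro c hc
      by_contra h
      push_neg at h
      exact absurd (Set.eq_empty_iff_forall_notMem.1 hx c ⟨⟨h.1, h.2⟩, hc⟩) (fun h => h)
    rcases hnot c₀ hc₀ with h0 | h0
    · refine ⟨1, ?_⟩
      simp only [Nat.cast_one, pow_zero, one_mul, mul_one]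
      refine le_antisymm prob_le_one ?_
      rw [← hsupp]
      refine measure_mono fun c hc => ?_
      rcases hnot c hc with h | h
      · exact le_trans h (by linarith)
      · exfalso
        have := (hCsub hc).2
        have := (hCsub hc₀).1
        linarith
    · refine ⟨0, ?_⟩
      simp only [Nat.cast_zero, zero_mul]
      rw [meas_inter_C hCmeas hsupp]
      convert measure_empty (μ := μ)
      refine Set.eq_empty_iff_forall_notMem.2 fun c ⟨hcx, hcC⟩ => ?_
      rcases hnot c hcC with h | h
      · have := (hCsub hcC).1
        have := (hCsub hc₀).2
        linarith
      · simp only [mem_Iic] at hcx; linarith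
  | succ k IH =>
    intro x hx
    have hkey : ∀ d : ℕ, ∃ j : ℕ, d ∈ D →
        μ (Iic ((N:ℝ)*x - d)) = (j : ℝ≥0∞) * ((D.card : ℝ≥0∞)⁻¹)^k := by
      intro d
      by_cases hd : d ∈ D
      · have hgap : Set.Ioo (((N:ℝ)*x - d) - ((N:ℝ))⁻¹^k) (((N:ℝ)*x - d) + ((N:ℝ))⁻¹^k) ∩ C = ∅ := by
          refine Set.eq_empty_iff_forall_notMem.2 fun c ⟨hc1, hc2⟩ => ?_
          have hmem : ((c + d)/N : ℝ) ∈ C := hfC d hd c hc2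
          have h1 : x - ((N:ℝ))⁻¹^(k+1) < (c + d)/N := by
            rw [lt_div_iff₀ hN0]
            have := hc1.1
            have hpow : ((N:ℝ))⁻¹^(k+1) * N = ((N:ℝ))⁻¹^k := by
              rw [pow_succ, mul_assoc, inv_mul_cancel₀ (ne_of_gt hN0), mul_one]
            nlinarith [hc1.1]
          have h2 : ((c + d)/N : ℝ) < x + ((N:ℝ))⁻¹^(k+1) := by
            rw [div_lt_iff₀ hN0]
            have hpow : ((N:ℝ))⁻¹^(k+1) * N = ((N:ℝ))⁻¹^k := by
              rw [pow_succ, mul_assoc, inv_mul_cancel₀ (ne_of_gt hN0), mul_one]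
            nlinarith [hc1.2]
          exact Set.eq_empty_iff_forall_notMem.1 hx _ ⟨⟨h1, h2⟩, hmem⟩
        obtain ⟨j, hj⟩ := IH ((N:ℝ)*x - d) hgap
        exact ⟨j, fun _ => hj⟩
      · exact ⟨0, fun h => absurd h hd⟩
    choose j hj using hkey
    refine ⟨∑ d ∈ D, j d, ?_⟩
    rw [hinv_apply hinv _ measurableSet_Iic]
    have : ∀ d ∈ D, μ ((fun x : ℝ => (x + (d:ℝ)) / N) ⁻¹' Iic x)
        = (j d : ℝ≥0∞) * ((D.card : ℝ≥0∞)⁻¹)^k := by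
      intro d hd
      rw [preimage_Iic hN0]
      exact hj d hd
    rw [Finset.sum_congr rfl this, ← Finset.sum_mul, pow_succ]
    push_cast
    ring

lemma cylinder {N : ℕ} {D : Finset ℕ} {C : Set ℝ} {μ : Measure ℝ} [IsProbabilityMeasure μ]
    (hN : 3 ≤ N)
    (hCsub : C ⊆ Set.Icc 0 1)
    (hCattr : C = ⋃ d ∈ D, (fun x : ℝ => (x + (d : ℝ)) / N) '' C)
    (hsupp : μ C = 1)
    (hinv : μ = (D.card : ℝ≥0∞)⁻¹ • ∑ d ∈ D, μ.map (fun x : ℝ => (x + (d : ℝ)) / N)) :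
    ∀ (k : ℕ), ∀ c ∈ C, ∃ r : ℝ, r ≤ c ∧ c ≤ r + ((N:ℝ))⁻¹^k ∧
      ((D.card : ℝ≥0∞)⁻¹)^k ≤ μ (Icc r (r + ((N:ℝ))⁻¹^k)) := by
  have hN0 : (0:ℝ) < N := by positivity
  intro k
  induction k with
  | zero =>
    intro c hc
    refine ⟨0, (hCsub hc).1, by simpa using (hCsub hc).2, ?_⟩
    simp only [pow_zero, zero_add]
    rw [← hsupp]
    exact measure_mono (by simpa using hCsub)
  | succ k IH =>
    intro c hc
    rw [hCattr] at hc
    obtain ⟨d, hd, c', hc', hcc⟩ := by simpa only [mem_iUnion, mem_image] using hc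
    obtain ⟨r', hr1, hr2, hr3⟩ := IH c' hc'
    refine ⟨(r' + d)/N, ?_, ?_, ?_⟩
    · rw [← hcc]
      exact div_le_div_of_nonneg_right (by linarith) hN0.le
    · rw [← hcc]
      rw [div_add' _ _ _ (ne_of_gt hN0), div_le_div_iff_of_pos_right hN0]
      have : ((N:ℝ))⁻¹^(k+1) * N = ((N:ℝ))⁻¹^k := by
        rw [pow_succ, mul_assoc, inv_mul_cancel₀ (ne_of_gt hN0), mul_one]
      nlinarith
    · have hpre : (fun x : ℝ => (x + (d:ℝ)) / N) ⁻¹' Icc ((r' + d)/N) ((r' + d)/N + ((N:ℝ))⁻¹^(k+1))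
          = Icc r' (r' + ((N:ℝ))⁻¹^k) := by
        have hNne : (N:ℝ) ≠ 0 := ne_of_gt hN0
        have e1 : (N:ℝ) * ((r' + d)/N) - d = r' := by field_simp; ring
        have e2 : (N:ℝ) * ((r' + d)/N + ((N:ℝ))⁻¹^(k+1)) - d = r' + ((N:ℝ))⁻¹^k := by
          rw [mul_add, mul_div_cancel₀ _ hNne, pow_succ', ← mul_assoc, mul_inv_cancel₀ hNne, one_mul]
          ring
        rw [preimage_Icc hN0, e1, e2]
      calc ((D.card : ℝ≥0∞)⁻¹)^(k+1)
          = (D.card : ℝ≥0∞)⁻¹ * ((D.card : ℝ≥0∞)⁻¹)^k := by ring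
        _ ≤ (D.card : ℝ≥0∞)⁻¹ * μ (Icc r' (r' + ((N:ℝ))⁻¹^k)) := mul_le_mul_right hr3 _
        _ = (D.card : ℝ≥0∞)⁻¹ *
            μ ((fun x : ℝ => (x + (d:ℝ)) / N) ⁻¹' Icc ((r' + d)/N) ((r' + d)/N + ((N:ℝ))⁻¹^(k+1))) := by
            rw [hpre]
        _ ≤ _ := term_le hinv hd _ measurableSet_Icc

lemma Fe_lt_one {N : ℕ} {D : Finset ℕ} {C : Set ℝ} {μ : Measure ℝ} [IsProbabilityMeasure μ]
    (hN : 3 ≤ N) (hcard : 2 ≤ D.card)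
    (hCcompact : IsCompact C) (hCne : C.Nonempty) (hCsub : C ⊆ Set.Icc 0 1)
    (hCattr : C = ⋃ d ∈ D, (fun x : ℝ => (x + (d : ℝ)) / N) '' C)
    (hcyl : ∀ (k : ℕ), ∀ c ∈ C, ∃ r : ℝ, r ≤ c ∧ c ≤ r + ((N:ℝ))⁻¹^k ∧
      ((D.card : ℝ≥0∞)⁻¹)^k ≤ μ (Icc r (r + ((N:ℝ))⁻¹^k)))
    {y : ℝ} (hy : y ∈ C) (hyirr : Irrational y) :
    (μ (Iic y)).toReal < 1 := by
  have hN0 : (0:ℝ) < N := by positivity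
  have hN1 : (1:ℝ) < N := by exact_mod_cast lt_of_lt_of_le (by norm_num) hN
  have hfC : ∀ d ∈ D, ∀ c ∈ C, ((c + d) / N : ℝ) ∈ C := by
    intro d hd c hc
    rw [hCattr]
    exact mem_iUnion₂.2 ⟨d, hd, c, hc, rfl⟩
  set M := sSup C with hM
  have hMC : M ∈ C := hCcompact.sSup_mem hCne
  have hub : ∀ c ∈ C, c ≤ M := fun c hc => le_csSup hCcompact.bddAbove hc
  have hDne : D.Nonempty := Finset.card_pos.1 (by omega)
  set dmax := D.max' hDne with hdmax
  have h1 : (M + dmax)/N ≤ M := hub _ (hfC dmax (D.max'_mem hDne) M hMC)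
  have h2 : M ≤ (M + dmax)/N := by
    have hMmem := hMC
    rw [hCattr] at hMmem
    obtain ⟨d, hd, c', hc', hcc⟩ := by simpa only [mem_iUnion, mem_image] using hMmem
    have hc'M : c' ≤ M := hub _ hc'
    have hdm : (d:ℝ) ≤ dmax := by exact_mod_cast D.le_max' d hd
    rw [← hcc]
    exact div_le_div_of_nonneg_right (by linarith) hN0.le
  have hMeq : M = (M + dmax)/N := le_antisymm h2 h1
  have hMrat : M = (((dmax : ℚ) / ((N:ℚ) - 1) : ℚ) : ℝ) := by
    have hNne : (N:ℝ) - 1 ≠ 0 := by linarith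
    have : M * ((N:ℝ) - 1) = dmax := by
      field_simp at hMeq
      linarith [hMeq]
    push_cast
    field_simp
    linarith [this]
  have hyM : y < M := by
    rcases lt_or_eq_of_le (hub y hy) with h | h
    · exact h
    · exact absurd (h ▸ hMrat) (hyirr.ne_rat _)
  obtain ⟨k, hk⟩ := exists_pow_lt_of_lt_one (sub_pos.2 hyM)
    (by rw [inv_lt_one_iff₀]; right; exact hN1)
  obtain ⟨r, hr1, hr2, hr3⟩ := hcyl k M hMC
  have hsub : Icc r (r + ((N:ℝ))⁻¹^k) ⊆ Ioi y := by
    intro t ht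
    have : y < r := by linarith [ht.1]
    exact lt_of_lt_of_le this ht.1
  have hIoi : ((D.card : ℝ≥0∞)⁻¹)^k ≤ μ (Ioi y) := hr3.trans (measure_mono hsub)
  have hsum : μ (Iic y) + μ (Ioi y) = 1 := by
    have := measure_add_measure_compl (μ := μ) (measurableSet_Iic (a := y))
    rwa [compl_Iic, measure_univ] at this
  have hle : μ (Iic y) + ((D.card : ℝ≥0∞)⁻¹)^k ≤ 1 := by
    calc μ (Iic y) + ((D.card : ℝ≥0∞)⁻¹)^k ≤ μ (Iic y) + μ (Ioi y) := add_le_add_right hIoi _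
      _ = 1 := hsum
  have hfin1 : μ (Iic y) ≠ ⊤ := measure_ne_top μ _
  have hcard0 : (D.card : ℝ≥0∞) ≠ 0 := Nat.cast_ne_zero.2 (by omega)
  have hfin2 : ((D.card : ℝ≥0∞)⁻¹)^k ≠ ⊤ := by
    apply ENNReal.pow_ne_top
    simp [ENNReal.inv_ne_top, hcard0]
  have hpos : (0:ℝ) < (((D.card : ℝ≥0∞)⁻¹)^k).toReal := by
    apply ENNReal.toReal_pos _ hfin2
    apply pow_ne_zero
    simp [ENNReal.inv_ne_zero]
  have := ENNReal.toReal_mono (by norm_num) hle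
  rw [ENNReal.toReal_add hfin1 hfin2, ENNReal.toReal_one] at this
  linarith

lemma step_rec {N : ℕ} {D : Finset ℕ} {μ : Measure ℝ} [IsProbabilityMeasure μ]
    (hN : 3 ≤ N)
    (hinvapp : ∀ (s : Set ℝ), MeasurableSet s →
      μ s = (D.card : ℝ≥0∞)⁻¹ * ∑ d ∈ D, μ ((fun x : ℝ => (x + (d:ℝ)) / N) ⁻¹' s))
    (hpre : ∀ (d : ℕ) (y : ℝ), (fun x : ℝ => (x + (d:ℝ)) / N) ⁻¹' Iic y = Iic ((N:ℝ)*y - d))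
    (hFe1 : ∀ {t : ℝ}, 1 ≤ t → μ (Iic t) = 1)
    (hFe0 : ∀ {t : ℝ}, t < 0 → μ (Iic t) = 0)
    {z : ℝ} (hz : z ∈ Ioo (0:ℝ) 1) {d : ℕ} (hd : d ∈ D) :
    μ (Iic ((z + d)/N)) = (D.card : ℝ≥0∞)⁻¹ *
      (((D.filter (· < d)).card : ℝ≥0∞) + μ (Iic z)) := by
  have hN0 : (0:ℝ) < N := by positivity
  rw [hinvapp _ measurableSet_Iic]
  congr 1
  have harg : ∀ d' : ℕ, (N:ℝ) * ((z + d)/N) - d' = z + d - d' := by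
    intro d'
    field_simp
  have hterm : ∀ d' ∈ D, μ ((fun x : ℝ => (x + (d':ℝ)) / N) ⁻¹' Iic ((z + d)/N))
      = (if d' < d then (1:ℝ≥0∞) else 0) + (if d' = d then μ (Iic z) else 0) := by
    intro d' _
    rw [hpre, harg]
    rcases lt_trichotomy d' d with h | h | h
    · have hge : (1:ℝ) ≤ z + d - d' := by
        have : (d':ℝ) + 1 ≤ d := by exact_mod_cast Nat.succ_le_of_lt h
        linarith [hz.1]
      rw [hFe1 hge, if_pos h, if_neg (ne_of_lt h), add_zero]
    · subst h
      simp [hz.1.le, hFe1]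
    · have hlt : z + (d:ℝ) - d' < 0 := by
        have : (d:ℝ) + 1 ≤ d' := by exact_mod_cast Nat.succ_le_of_lt h
        linarith [hz.2]
      rw [hFe0 hlt, if_neg (by omega), if_neg (by omega), add_zero]
  rw [Finset.sum_congr rfl hterm, Finset.sum_add_distrib, Finset.sum_boole,
    Finset.sum_ite_eq' D d (fun _ => μ (Iic z)), if_pos hd]

lemma rank_lt {D : Finset ℕ} {e1 e2 : ℕ} (he1 : e1 ∈ D) (hlt : e1 < e2) :
    (D.filter (· < e1)).card < (D.filter (· < e2)).card := by
  apply Finset.card_lt_card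
  rw [Finset.ssubset_iff_of_subset (Finset.monotone_filter_right D (fun x _ hx => lt_trans hx hlt))]
  exact ⟨e1, Finset.mem_filter.2 ⟨he1, hlt⟩, by simp⟩

lemma rank_inj {D : Finset ℕ} {d1 d2 : ℕ} (h1 : d1 ∈ D) (h2 : d2 ∈ D)
    (h : (D.filter (· < d1)).card = (D.filter (· < d2)).card) : d1 = d2 := by
  by_contra hne
  rcases Ne.lt_or_gt hne with hlt | hlt
  · exact absurd h (ne_of_lt (rank_lt h1 hlt))
  · exact absurd h.symm (ne_of_lt (rank_lt h2 hlt))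

end CantorAux

theorem irrational_mem_cantor_iff_cdf_irrational
    (N : ℕ) (hN : 3 ≤ N) (D : Finset ℕ) (hD : D ⊆ Finset.range N)
    (hcard : 2 ≤ D.card) (hcard' : D.card ≤ N - 1)
    (C : Set ℝ) (hCcompact : IsCompact C) (hCne : C.Nonempty)
    (hCsub : C ⊆ Set.Icc 0 1)
    (hCattr : C = ⋃ d ∈ D, (fun x : ℝ => (x + (d : ℝ)) / N) '' C)
    (μ : Measure ℝ) [IsProbabilityMeasure μ]
    (hsupp : μ C = 1)
    (hinv : μ = (D.card : ℝ≥0∞)⁻¹ • ∑ d ∈ D, μ.map (fun x : ℝ => (x + (d : ℝ)) / N)) :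
    ∀ x ∈ Set.Icc (0:ℝ) 1, Irrational x →
      (x ∈ C ↔ Irrational ((μ (Set.Icc 0 x)).toReal)) := by
  intro x hx hxirr
  classical
  have hN0 : (0:ℝ) < N := by positivity
  have hN1 : (1:ℝ) < N := by exact_mod_cast lt_of_lt_of_le (by norm_num) hN
  have hinvlt1 : ((N:ℝ))⁻¹ < 1 := by rw [inv_lt_one_iff₀]; right; exact hN1
  have hCmeas : MeasurableSet C := hCcompact.isClosed.measurableSet
  have hm0 : (D.card : ℝ≥0∞) ≠ 0 := Nat.cast_ne_zero.2 (by omega)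
  have hmtop : (D.card : ℝ≥0∞) ≠ ⊤ := ENNReal.natCast_ne_top _
  have hIcc_Iic : μ (Set.Icc 0 x) = μ (Set.Iic x) := by
    rw [CantorAux.meas_inter_C hCmeas hsupp (Set.Icc 0 x),
        CantorAux.meas_inter_C hCmeas hsupp (Set.Iic x)]
    congr 1
    ext c
    simp only [Set.mem_inter_iff, Set.mem_Icc, Set.mem_Iic]
    constructor
    · rintro ⟨⟨_, h2⟩, hc⟩; exact ⟨h2, hc⟩
    · rintro ⟨h2, hc⟩; exact ⟨⟨(hCsub hc).1, h2⟩, hc⟩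
  constructor
  · -- forward direction
    intro hxC
    by_contra hFnotirr
    obtain ⟨q, hq⟩ : ∃ q : ℚ, (q:ℝ) = (μ (Set.Icc 0 x)).toReal := not_not.1 hFnotirr
    have hdecomp : ∀ y : ℝ, y ∈ C → Irrational y →
        ∃ z dd, z ∈ C ∧ Irrational z ∧ dd ∈ D ∧ y = (z + dd)/N := by
      intro y hy hyirr
      rw [hCattr] at hy
      obtain ⟨dd, hdd, z, hz, hzy⟩ := by simpa only [Set.mem_iUnion, Set.mem_image] using hy
      refine ⟨z, dd, hz, ?_, hdd, hzy.symm⟩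
      intro hzrange
      obtain ⟨r, hr⟩ := hzrange
      exact hyirr ⟨(r + dd)/N, by push_cast; rw [hr, hzy]⟩
    choose! Z Dg hZC hZirr hDgD hZrec using hdecomp
    set y : ℕ → ℝ := fun i => Z^[i] x with hy_def
    have hy0 : y 0 = x := rfl
    have hysucc : ∀ i, y (i+1) = Z (y i) := by
      intro i
      simp only [hy_def]
      exact Function.iterate_succ_apply' Z i x
    have hyCirr : ∀ i, y i ∈ C ∧ Irrational (y i) := by
      intro i
      induction i with
      | zero => exact ⟨hxC, hxirr⟩
      | succ i ih =>
        rw [hysucc]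
        exact ⟨hZC _ ih.1 ih.2, hZirr _ ih.1 ih.2⟩
    set d : ℕ → ℕ := fun i => Dg (y i) with hd_def
    have hdD : ∀ i, d i ∈ D := fun i => hDgD _ (hyCirr i).1 (hyCirr i).2
    have hrec : ∀ i, y i = (y (i+1) + d i)/N := by
      intro i
      rw [hysucc]
      exact hZrec _ (hyCirr i).1 (hyCirr i).2
    have hmemIoo : ∀ i, y i ∈ Set.Ioo (0:ℝ) 1 := by
      intro i
      obtain ⟨hC, hirr⟩ := hyCirr i
      obtain ⟨h0, h1⟩ := hCsub hC
      constructor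
      · rcases h0.lt_or_eq with h | h
        · exact h
        · exact absurd h.symm (by simpa using hirr.ne_rat 0)
      · rcases h1.lt_or_eq with h | h
        · exact h
        · exact absurd h (by simpa using hirr.ne_rat 1)
    have hstep : ∀ i, μ (Set.Iic (y i)) = (D.card : ℝ≥0∞)⁻¹ *
        (((D.filter (· < d i)).card : ℝ≥0∞) + μ (Set.Iic (y (i+1)))) := by
      intro i
      conv_lhs => rw [hrec i]
      exact CantorAux.step_rec hN (CantorAux.hinv_apply hinv)
        (fun d' y' => CantorAux.preimage_Iic hN0 d' y')
        (fun ht => CantorAux.Fe_one hCsub hsupp ht)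
        (fun ht => CantorAux.Fe_zero hCmeas hCsub hsupp ht)
        (hmemIoo (i+1)) (hdD i)
    set a : ℕ → ℝ := fun i => (μ (Set.Iic (y i))).toReal with ha_def
    set c : ℕ → ℕ := fun i => (D.filter (· < d i)).card with hc_def
    have hA : ∀ i, (D.card : ℝ) * a i = c i + a (i+1) := by
      intro i
      have h1 : (D.card : ℝ≥0∞) * μ (Set.Iic (y i))
          = ((c i : ℕ) : ℝ≥0∞) + μ (Set.Iic (y (i+1))) := by
        rw [hstep i, ← mul_assoc, ENNReal.mul_inv_cancel hm0 hmtop, one_mul, hc_def]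
      have h2 := congrArg ENNReal.toReal h1
      rwa [ENNReal.toReal_mul, ENNReal.toReal_add (ENNReal.natCast_ne_top _) (measure_ne_top μ _),
        ENNReal.toReal_natCast, ENNReal.toReal_natCast] at h2
    have hcyl := CantorAux.cylinder hN hCsub hCattr hsupp hinv
    have ha0 : ∀ i, 0 ≤ a i := fun i => ENNReal.toReal_nonneg
    have ha1 : ∀ i, a i < 1 := fun i =>
      CantorAux.Fe_lt_one hN hcard hCcompact hCne hCsub hCattr hcyl (hyCirr i).1 (hyCirr i).2
    have haq : a 0 = (q:ℝ) := by
      show (μ (Set.Iic (y 0))).toReal = (q:ℝ)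
      rw [hy0, ← hIcc_Iic, ← hq]
    have hint : ∀ i, ∃ z : ℤ, a i * q.den = z := by
      intro i
      induction i with
      | zero =>
        refine ⟨q.num, ?_⟩
        rw [haq]
        exact_mod_cast congrArg (Rat.cast (K := ℝ)) (Rat.mul_den_eq_num q)
      | succ i ih =>
        obtain ⟨z, hz⟩ := ih
        refine ⟨D.card * z - c i * q.den, ?_⟩
        have h1 : a (i+1) = D.card * a i - c i := by linarith [hA i]
        rw [h1, sub_mul, mul_assoc, hz]
        push_cast
        ring
    have hden0 : (0:ℝ) < q.den := by
      have := q.den_pos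
      exact_mod_cast this
    choose w hw using hint
    have hwmem : ∀ i, w i ∈ Finset.Ico (0:ℤ) (q.den:ℤ) := by
      intro i
      rw [Finset.mem_Ico]
      constructor
      · have : (0:ℝ) ≤ (w i : ℝ) := by
          rw [← hw i]; exact mul_nonneg (ha0 i) hden0.le
        exact_mod_cast this
      · have : (w i : ℝ) < (q.den:ℝ) := by
          rw [← hw i]
          calc a i * q.den < 1 * q.den := by
                exact mul_lt_mul_of_pos_right (ha1 i) hden0
            _ = q.den := one_mul _
        exact_mod_cast this
    obtain ⟨i0, -, j0, -, hne0, hweq⟩ := Finset.exists_ne_map_eq_of_card_lt_of_maps_to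
      (s := Finset.range (q.den + 1)) (t := Finset.Ico (0:ℤ) (q.den:ℤ))
      (by rw [Int.card_Ico, Finset.card_range]; simp) (fun i _ => hwmem i)
    have haeq0 : a i0 = a j0 := by
      have h1 := hw i0
      have h2 := hw j0
      rw [hweq] at h1
      have := h1.trans h2.symm
      exact mul_right_cancel₀ (ne_of_gt hden0) this
    obtain ⟨i, j, hij, haij⟩ : ∃ i j, i < j ∧ a i = a j := by
      rcases hne0.lt_or_gt with h | h
      · exact ⟨i0, j0, h, haeq0⟩
      · exact ⟨j0, i0, h, haeq0.symm⟩
    have hdet : ∀ i' j', a i' = a j' → c i' = c j' ∧ a (i'+1) = a (j'+1) := by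
      intro i' j' he
      have h1 := hA i'
      have h2 := hA j'
      have b1 := ha0 (i'+1); have b2 := ha1 (i'+1)
      have b3 := ha0 (j'+1); have b4 := ha1 (j'+1)
      have heq : (c i' : ℝ) + a (i'+1) = (c j' : ℝ) + a (j'+1) := by
        rw [← h1, ← h2, he]
      have e1 : (c i' : ℝ) < (c j' : ℝ) + 1 := by linarith
      have e2 : (c j' : ℝ) < (c i' : ℝ) + 1 := by linarith
      have n1 : c i' < c j' + 1 := by exact_mod_cast e1
      have n2 : c j' < c i' + 1 := by exact_mod_cast e2
      have hc : c i' = c j' := by omega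
      refine ⟨hc, ?_⟩
      have hcr : (c i' : ℝ) = (c j' : ℝ) := by exact_mod_cast hc
      linarith
    have haeq : ∀ t, a (i + t) = a (j + t) := by
      intro t
      induction t with
      | zero => simpa using haij
      | succ t ih => exact (hdet (i+t) (j+t) ih).2
    have hdeq : ∀ t, d (i + t) = d (j + t) := by
      intro t
      have hceq := (hdet _ _ (haeq t)).1
      rw [hc_def] at hceq
      exact CantorAux.rank_inj (hdD _) (hdD _) hceq
    have hydiff : ∀ t, y i - y j = ((N:ℝ))⁻¹^t * (y (i+t) - y (j+t)) := by
      intro t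
      induction t with
      | zero => simp
      | succ t ih =>
        have e1 : y (i+t) = (y (i+t+1) + d (i+t))/N := hrec (i+t)
        have e2 : y (j+t) = (y (j+t+1) + d (j+t))/N := hrec (j+t)
        rw [ih, e1, e2, hdeq t]
        have hNne : (N:ℝ) ≠ 0 := ne_of_gt hN0
        field_simp
        ring_nf
        simp only [mul_inv_cancel₀ hNne, one_mul]
    have hyeq : y i = y j := by
      by_contra hne
      have habs : 0 < |y i - y j| := abs_pos.2 (sub_ne_zero.2 hne)
      obtain ⟨t, ht⟩ := exists_pow_lt_of_lt_one habs hinvlt1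
      have hb : |y (i+t) - y (j+t)| ≤ 1 := by
        have p1 := hCsub (hyCirr (i+t)).1
        have p2 := hCsub (hyCirr (j+t)).1
        rw [abs_le]
        constructor
        · linarith [p1.1, p2.2]
        · linarith [p1.2, p2.1]
      have hfin : |y i - y j| ≤ ((N:ℝ))⁻¹^t := by
        rw [hydiff t, abs_mul, abs_pow, abs_inv, Nat.abs_cast]
        calc ((N:ℝ))⁻¹^t * |y (i+t) - y (j+t)| ≤ ((N:ℝ))⁻¹^t * 1 :=
              mul_le_mul_of_nonneg_left hb (by positivity)
          _ = ((N:ℝ))⁻¹^t := mul_one _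
      linarith
    have hqrep : ∀ t, ∃ r : ℚ, y i = (r:ℝ) + ((N:ℝ))⁻¹^t * y (i + t) := by
      intro t
      induction t with
      | zero => exact ⟨0, by simp⟩
      | succ t ih =>
        obtain ⟨r, hr⟩ := ih
        refine ⟨r + (d (i+t) : ℚ) * ((N:ℚ))⁻¹^(t+1), ?_⟩
        have e1 : y (i+t) = (y (i+t+1) + d (i+t))/N := hrec (i+t)
        rw [e1] at hr
        rw [hr]
        have hNne : (N:ℝ) ≠ 0 := ne_of_gt hN0
        have hNQne : (N:ℚ) ≠ 0 := Nat.cast_ne_zero.2 (by omega)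
        push_cast
        field_simp
        ring_nf
        simp only [mul_inv_cancel₀ hNne, one_mul]
    have hp0 : j - i ≠ 0 := by omega
    have hjp : i + (j - i) = j := by omega
    obtain ⟨r, hr⟩ := hqrep (j - i)
    rw [hjp, ← hyeq] at hr
    have hinvp : ((N:ℝ))⁻¹^(j-i) < 1 :=
      pow_lt_one₀ (by positivity) hinvlt1 hp0
    have hinvp0 : (0:ℝ) < ((N:ℝ))⁻¹^(j-i) := by positivity
    have hne1 : (1:ℝ) - ((N:ℝ))⁻¹^(j-i) ≠ 0 := ne_of_gt (by linarith)
    have hfinal : y i = ((r / (1 - ((N:ℚ))⁻¹^(j-i)) : ℚ) : ℝ) := by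
      have hcast : ((1 - ((N:ℚ))⁻¹^(j-i) : ℚ) : ℝ) = 1 - ((N:ℝ))⁻¹^(j-i) := by
        push_cast
        ring
      rw [Rat.cast_div, hcast, eq_div_iff hne1]
      linear_combination hr
    exact (hyCirr i).2 ⟨_, hfinal.symm⟩
  · -- backward direction
    intro hF
    by_contra hxC
    have hopen : IsOpen Cᶜ := hCcompact.isClosed.isOpen_compl
    obtain ⟨ε, hε, hball⟩ := Metric.isOpen_iff.1 hopen x hxC
    obtain ⟨k, hk⟩ := exists_pow_lt_of_lt_one hε hinvlt1
    have hgap : Set.Ioo (x - ((N:ℝ))⁻¹^k) (x + ((N:ℝ))⁻¹^k) ∩ C = ∅ := by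
      refine Set.eq_empty_iff_forall_notMem.2 fun t ⟨ht1, ht2⟩ => ?_
      have : t ∈ Metric.ball x ε := by
        rw [Real.ball_eq_Ioo]
        exact ⟨by linarith [ht1.1], by linarith [ht1.2]⟩
      exact hball this ht2
    obtain ⟨j, hj⟩ := CantorAux.gap_lemma hN hCne hCsub hCmeas hCattr hsupp hinv k x hgap
    apply hF
    refine ⟨(j : ℚ) * ((D.card : ℚ))⁻¹^k, ?_⟩
    rw [hIcc_Iic, hj, ENNReal.toReal_mul, ENNReal.toReal_pow, ENNReal.toReal_inv,
      ENNReal.toReal_natCast, ENNReal.toReal_natCast]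
    push_cast
    ring
end

section
/- If x ∈ [0,1] does not belong to the Cantor set C_B, then F_B(x) is rational. -/
open MeasureTheory Set
open scoped ENNReal

theorem cdf_rational_outside_cantor
    (N : ℕ) (hN : 3 ≤ N) (D : Finset ℕ) (hD : D ⊆ Finset.range N)
    (hcard : 2 ≤ D.card) (hcard' : D.card ≤ N - 1)
    (C : Set ℝ) (hCcompact : IsCompact C) (hCne : C.Nonempty)
    (hCsub : C ⊆ Set.Icc 0 1)
    (hCattr : C = ⋃ d ∈ D, (fun x : ℝ => (x + (d : ℝ)) / N) '' C)
    (μ : Measure ℝ) [IsProbabilityMeasure μ]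
    (hsupp : μ C = 1)
    (hinv : μ = (D.card : ℝ≥0∞)⁻¹ • ∑ d ∈ D, μ.map (fun x : ℝ => (x + (d : ℝ)) / N)) :
    ∀ x ∈ Set.Icc (0:ℝ) 1, x ∉ C →
      ∃ q : ℚ, (μ (Set.Icc 0 x)).toReal = (q : ℝ) := by
  have hN3 : (3:ℝ) ≤ N := by exact_mod_cast hN
  have hN0 : (0:ℝ) < N := by linarith
  have hCclosed := hCcompact.isClosed
  have hCmeas := hCclosed.measurableSet
  have hcompl : μ Cᶜ = 0 := by
    have h := measure_compl hCmeas (measure_ne_top μ C)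
    rw [hsupp, measure_univ] at h
    simpa using h
  have hμinter : ∀ A : Set ℝ, μ A = μ (A ∩ C) := by
    intro A
    have h := measure_inter_add_diff A hCmeas (μ := μ)
    have h0 : μ (A \ C) = 0 := measure_mono_null (fun y hy => hy.2) hcompl
    rw [h0, add_zero] at h
    exact h.symm
  have hSmeas : ∀ d : ℕ, Measurable (fun y : ℝ => (y + (d:ℝ))/N) := fun d =>
    (measurable_id.add_const _).div_const _
  have hself : ∀ d ∈ D, ∀ c ∈ C, (c + (d:ℝ))/N ∈ C := by
    intro d hd c hc
    rw [hCattr]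
    exact Set.mem_biUnion hd ⟨c, hc, rfl⟩
  obtain ⟨c0, hc0⟩ := hCne
  have key : ∀ k : ℕ, ∀ z : ℝ, z ∈ Icc (0:ℝ) 1 → z ∉ C →
      ∀ b : ℝ, (∀ c ∈ C, b ≤ dist z c) → 1 < (N:ℝ)^k * b →
      ∃ q : ℚ, (μ (Icc 0 z)).toReal = (q : ℝ) := by
    intro k
    induction k with
    | zero =>
      intro z hz hzC b hb hgt
      exfalso
      have h1 : b ≤ dist z c0 := hb c0 hc0
      have h2 : dist z c0 ≤ 1 := by
        rw [Real.dist_eq, abs_le]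
        have hc := hCsub hc0
        exact ⟨by linarith [hz.1, hz.2, hc.1, hc.2], by linarith [hz.1, hz.2, hc.1, hc.2]⟩
      simp only [pow_zero, one_mul] at hgt
      linarith
    | succ k ih =>
      intro z hz hzC b hb hgt
      have hbpos : 0 < b := by
        nlinarith [pow_pos hN0 (k+1)]
      -- rewrite the measure via self-similarity
      have happ : μ (Icc 0 z)
          = (D.card : ℝ≥0∞)⁻¹ * ∑ d ∈ D, μ (Icc (-(d:ℝ)) ((N:ℝ)*z - d)) := by
        conv_lhs => rw [hinv]
        rw [Measure.smul_apply, smul_eq_mul]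
        congr 1
        rw [Measure.coe_finset_sum, Finset.sum_apply]
        refine Finset.sum_congr rfl fun d _ => ?_
        rw [Measure.map_apply (hSmeas d) measurableSet_Icc]
        congr 1
        ext y
        simp only [Set.mem_preimage, Set.mem_Icc]
        rw [le_div_iff₀ hN0, div_le_iff₀ hN0]
        constructor <;> intro h <;> exact ⟨by nlinarith [h.1, h.2], by nlinarith [h.1, h.2]⟩
      have hterm : ∀ d ∈ D, ∃ q : ℚ, (μ (Icc (-(d:ℝ)) ((N:ℝ)*z - d))).toReal = (q : ℝ) := by
        intro d hd
        rcases lt_or_ge ((N:ℝ)*z - d) 0 with hneg | hge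
        · refine ⟨0, ?_⟩
          have hempty : Icc (-(d:ℝ)) ((N:ℝ)*z - d) ∩ C = ∅ := by
            ext c
            simp only [mem_inter_iff, mem_Icc, mem_empty_iff_false, iff_false, not_and]
            rintro ⟨_, h2⟩ hc
            have := (hCsub hc).1
            linarith
          rw [hμinter, hempty, measure_empty]
          simp
        · rcases lt_or_ge 1 ((N:ℝ)*z - d) with hbig | hle
          · refine ⟨1, ?_⟩
            have hsubC : C ⊆ Icc (-(d:ℝ)) ((N:ℝ)*z - d) := by
              intro c hc
              have h := hCsub hc
              have hd0 : (0:ℝ) ≤ d := Nat.cast_nonneg d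
              exact ⟨by linarith [h.1], by linarith [h.2]⟩
            have h1 : (1:ℝ≥0∞) ≤ μ (Icc (-(d:ℝ)) ((N:ℝ)*z - d)) :=
              hsupp ▸ measure_mono hsubC
            have h2 : μ (Icc (-(d:ℝ)) ((N:ℝ)*z - d)) ≤ 1 := prob_le_one
            rw [le_antisymm h2 h1]
            simp
          · set y := (N:ℝ)*z - d with hy
            have hy01 : y ∈ Icc (0:ℝ) 1 := ⟨hge, hle⟩
            have hzy : z = (y + d)/N := by
              rw [hy, eq_div_iff hN0.ne']
              ring
            have hyC : y ∉ C := by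
              intro h
              exact hzC (hzy ▸ hself d hd y h)
            have hb' : ∀ c ∈ C, (N:ℝ)*b ≤ dist y c := by
              intro c hc
              have hmem : (c + (d:ℝ))/N ∈ C := hself d hd c hc
              have h1 : b ≤ dist z ((c + (d:ℝ))/N) := hb _ hmem
              rw [Real.dist_eq] at h1 ⊢
              have habs : |y - c| = (N:ℝ) * |z - (c + (d:ℝ))/N| := by
                rw [← abs_of_pos hN0, ← abs_mul]
                congr 1
                rw [hy, abs_of_pos hN0]
                field_simp
                ring
              rw [habs]
              nlinarith
            have hgt' : 1 < (N:ℝ)^k * ((N:ℝ)*b) := by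
              have : (N:ℝ)^(k+1) * b = (N:ℝ)^k * ((N:ℝ)*b) := by ring
              linarith [this ▸ hgt]
            obtain ⟨q, hq⟩ := ih y hy01 hyC ((N:ℝ)*b) hb' hgt'
            refine ⟨q, ?_⟩
            rw [hμinter (Icc (-(d:ℝ)) y)]
            have hset : Icc (-(d:ℝ)) y ∩ C = Icc 0 y ∩ C := by
              ext c
              simp only [mem_inter_iff, mem_Icc]
              constructor
              · rintro ⟨⟨_, h2⟩, hc⟩
                exact ⟨⟨(hCsub hc).1, h2⟩, hc⟩
              · rintro ⟨⟨h1, h2⟩, hc⟩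
                have hd0 : (0:ℝ) ≤ d := Nat.cast_nonneg d
                exact ⟨⟨by linarith, h2⟩, hc⟩
            rw [hset, ← hμinter (Icc 0 y)]
            exact hq
      classical
      set Q : ℕ → ℚ := fun d =>
        if h : ∃ q : ℚ, (μ (Icc (-(d:ℝ)) ((N:ℝ)*z - d))).toReal = (q : ℝ)
        then h.choose else 0 with hQdef
      have hQ : ∀ d ∈ D, (μ (Icc (-(d:ℝ)) ((N:ℝ)*z - d))).toReal = ((Q d : ℚ) : ℝ) := by
        intro d hd
        rw [hQdef]
        simp only [dif_pos (hterm d hd)]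
        exact (hterm d hd).choose_spec
      refine ⟨(∑ d ∈ D, Q d) / D.card, ?_⟩
      rw [happ, ENNReal.toReal_mul, ENNReal.toReal_inv, ENNReal.toReal_natCast,
        ENNReal.toReal_sum (fun d _ => measure_ne_top μ _),
        Finset.sum_congr rfl hQ]
      push_cast
      ring
  intro x hx hxC
  have hεpos : 0 < Metric.infDist x C :=
    (hCclosed.notMem_iff_infDist_pos ⟨c0, hc0⟩).mp hxC
  obtain ⟨k, hk⟩ := pow_unbounded_of_one_lt (1 / Metric.infDist x C)
    (show (1:ℝ) < N from by linarith [hN3])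
  refine key k x hx hxC (Metric.infDist x C)
    (fun c hc => Metric.infDist_le_dist_of_mem hc) ?_
  rw [div_lt_iff₀ hεpos] at hk
  linarith
end

section
/- If B₁ and B₂ are binary digit vectors (of lengths N^L and N^M respectively, both powers of a common base N) whose Kronecker products commute, B₁⊗B₂ = B₂⊗B₁, then their Cantor CDFs coincide: F_{B₁} = F_{B₂}. -/
open MeasureTheory Set
open scoped ENNReal

/-- The Kronecker product of digit sets: `D₁ ⊗ D₂ = {c + b·N₂ : c ∈ D₂, b ∈ D₁}`,
where `N₂` is the scale factor of `D₂`. -/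
def kronDigitSet (N₂ : ℕ) (D₁ D₂ : Finset ℕ) : Finset ℕ :=
  Finset.image (fun p : ℕ × ℕ => p.2 + p.1 * N₂) (D₁ ×ˢ D₂)

noncomputable def ifsOp (R : ℕ) (D : Finset ℕ) (μ : Measure ℝ) : Measure ℝ :=
  (D.card : ℝ≥0∞)⁻¹ • ∑ d ∈ D, μ.map (fun x : ℝ => (x + (d : ℝ)) / (R : ℕ))

lemma ifs_meas (R d : ℕ) : Measurable (fun x : ℝ => (x + (d : ℝ)) / (R : ℕ)) :=
  (measurable_id.add_const _).div_const _

lemma ifsOp_apply (R : ℕ) (D : Finset ℕ) (μ : Measure ℝ) {s : Set ℝ}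
    (hs : MeasurableSet s) :
    ifsOp R D μ s =
      (D.card : ℝ≥0∞)⁻¹ * ∑ d ∈ D, μ ((fun x : ℝ => (x + (d : ℝ)) / (R : ℕ)) ⁻¹' s) := by
  simp only [ifsOp, Measure.smul_apply, smul_eq_mul]
  congr 1
  rw [Measure.finset_sum_apply]
  exact Finset.sum_congr rfl fun d _ => Measure.map_apply (ifs_meas R d) hs

lemma ifsOp_prob (R : ℕ) (D : Finset ℕ) (hD : D.Nonempty) (μ : Measure ℝ)
    [IsProbabilityMeasure μ] : IsProbabilityMeasure (ifsOp R D μ) := by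
  constructor
  rw [ifsOp_apply R D μ MeasurableSet.univ]
  simp only [Set.preimage_univ, measure_univ, Finset.sum_const, nsmul_eq_mul, mul_one]
  rw [ENNReal.inv_mul_cancel]
  · simpa using hD.card_pos.ne'
  · exact ENNReal.natCast_ne_top _

lemma measure_inter_unit (μ : Measure ℝ) [IsProbabilityMeasure μ]
    (h1 : μ (Set.Icc 0 1) = 1) (s : Set ℝ) : μ s = μ (s ∩ Set.Icc 0 1) := by
  have hc : μ (Set.Icc (0:ℝ) 1)ᶜ = 0 := by
    rw [prob_compl_eq_one_sub measurableSet_Icc, h1, tsub_self]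
  refine le_antisymm ?_ (measure_mono Set.inter_subset_left)
  calc μ s ≤ μ (s ∩ Set.Icc 0 1) + μ (s \ Set.Icc 0 1) := measure_le_inter_add_diff μ s _
    _ ≤ μ (s ∩ Set.Icc 0 1) + μ (Set.Icc (0:ℝ) 1)ᶜ :=
        add_le_add le_rfl (measure_mono (Set.diff_subset_compl _ _))
    _ = μ (s ∩ Set.Icc 0 1) := by rw [hc, add_zero]

lemma ifsOp_supp (R : ℕ) (hR : 0 < R) (D : Finset ℕ) (hD : D ⊆ Finset.range R)
    (hDne : D.Nonempty) (μ : Measure ℝ) [IsProbabilityMeasure μ]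
    (h1 : μ (Set.Icc 0 1) = 1) : ifsOp R D μ (Set.Icc 0 1) = 1 := by
  rw [ifsOp_apply R D μ measurableSet_Icc]
  have hterm : ∀ d ∈ D, μ ((fun x : ℝ => (x + (d : ℝ)) / (R : ℕ)) ⁻¹' Set.Icc 0 1) = 1 := by
    intro d hd
    have hdR : (d : ℝ) + 1 ≤ (R : ℝ) := by
      have := Finset.mem_range.mp (hD hd)
      exact_mod_cast this
    have hRpos : (0:ℝ) < (R : ℕ) := by exact_mod_cast hR
    refine le_antisymm prob_le_one ?_
    rw [← h1]
    apply measure_mono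
    intro y hy
    simp only [Set.mem_preimage, Set.mem_Icc] at *
    constructor
    · apply div_nonneg _ hRpos.le
      have : (0:ℝ) ≤ (d:ℝ) := Nat.cast_nonneg d
      linarith [hy.1]
    · rw [div_le_one hRpos]
      linarith [hy.1, hy.2]
  rw [Finset.sum_congr rfl hterm]
  simp only [Finset.sum_const, nsmul_eq_mul, mul_one]
  rw [ENNReal.inv_mul_cancel]
  · simpa using hDne.card_pos.ne'
  · exact ENNReal.natCast_ne_top _

lemma preimage_Icc_eq (R : ℕ) (hR : 0 < R) (d : ℕ) (hd : d < R) (μ : Measure ℝ)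
    [IsProbabilityMeasure μ] (h1 : μ (Set.Icc 0 1) = 1) (x : ℝ) :
    μ ((fun y : ℝ => (y + (d : ℝ)) / (R : ℕ)) ⁻¹' Set.Icc 0 x) =
      μ (Set.Icc 0 (min ((R : ℝ) * x - d) 1)) := by
  have hRpos : (0:ℝ) < (R : ℕ) := by exact_mod_cast hR
  have hd0 : (0:ℝ) ≤ (d:ℝ) := Nat.cast_nonneg d
  rw [measure_inter_unit μ h1]
  congr 1
  ext y
  simp only [Set.mem_inter_iff, Set.mem_preimage, Set.mem_Icc, le_min_iff]
  constructor
  · rintro ⟨⟨h0, hx⟩, hy0, hy1⟩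
    rw [div_le_iff₀ hRpos] at hx
    exact ⟨hy0, by linarith [hx], hy1⟩
  · rintro ⟨hy0, hRx, hy1⟩
    refine ⟨⟨div_nonneg (by linarith) hRpos.le, ?_⟩, hy0, hy1⟩
    rw [div_le_iff₀ hRpos]
    linarith


lemma ifsOp_contract (R : ℕ) (hR : 0 < R) (D : Finset ℕ) (hD : D ⊆ Finset.range R)
    (hcard : 2 ≤ D.card) (μ ν : Measure ℝ) [IsProbabilityMeasure μ] [IsProbabilityMeasure ν]
    (hμ1 : μ (Set.Icc 0 1) = 1) (hν1 : ν (Set.Icc 0 1) = 1) (δ : ℝ) (hδ : 0 ≤ δ)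
    (h : ∀ y : ℝ, |(μ (Set.Icc 0 y)).toReal - (ν (Set.Icc 0 y)).toReal| ≤ δ) (x : ℝ) :
    |((ifsOp R D μ) (Set.Icc 0 x)).toReal - ((ifsOp R D ν) (Set.Icc 0 x)).toReal| ≤ δ / 2 := by
  have hfin : ∀ (ρ : Measure ℝ) (_ : IsProbabilityMeasure ρ) (t : Set ℝ), ρ t ≠ ∞ :=
    fun ρ hρ t => (lt_of_le_of_lt prob_le_one ENNReal.one_lt_top).ne
  have key : ∀ (ρ : Measure ℝ) (_ : IsProbabilityMeasure ρ) (_ : ρ (Set.Icc 0 1) = 1),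
      ((ifsOp R D ρ) (Set.Icc 0 x)).toReal =
        ((D.card : ℝ))⁻¹ * ∑ d ∈ D, (ρ (Set.Icc 0 (min ((R : ℝ) * x - d) 1))).toReal := by
    intro ρ hρ h1
    rw [ifsOp_apply R D ρ measurableSet_Icc]
    rw [Finset.sum_congr rfl (fun d hd => preimage_Icc_eq R hR d (Finset.mem_range.mp (hD hd)) ρ h1 x)]
    rw [ENNReal.toReal_mul, ENNReal.toReal_inv, ENNReal.toReal_natCast,
      ENNReal.toReal_sum (fun d _ => hfin ρ hρ _)]
  rw [key μ ‹_› hμ1, key ν ‹_› hν1, ← mul_sub, ← Finset.sum_sub_distrib, abs_mul,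
    abs_of_nonneg (by positivity : (0:ℝ) ≤ ((D.card : ℝ))⁻¹)]
  set K := ⌊(R : ℝ) * x⌋₊ with hK
  have hsum : |∑ d ∈ D, ((μ (Set.Icc 0 (min ((R : ℝ) * x - d) 1))).toReal -
      (ν (Set.Icc 0 (min ((R : ℝ) * x - d) 1))).toReal)| ≤ δ := by
    calc _ ≤ ∑ d ∈ D, |(μ (Set.Icc 0 (min ((R : ℝ) * x - d) 1))).toReal -
        (ν (Set.Icc 0 (min ((R : ℝ) * x - d) 1))).toReal| := Finset.abs_sum_le_sum_abs _ _
      _ ≤ ∑ d ∈ D, (if d = K then δ else 0) := by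
          apply Finset.sum_le_sum
          intro d hd
          by_cases hdK : d = K
          · simp only [hdK, if_true]
            exact h _
          · simp only [hdK, if_false]
            by_cases hle : (d : ℝ) ≤ (R : ℝ) * x
            · have hx0 : (0:ℝ) ≤ (R : ℝ) * x := le_trans (Nat.cast_nonneg d) hle
              have hdK' : d < K := lt_of_le_of_ne (Nat.le_floor hle) hdK
              have h1le : (R : ℝ) * x - d ≥ 1 := by
                have : (d : ℝ) + 1 ≤ (K : ℝ) := by exact_mod_cast hdK'
                have := Nat.floor_le hx0
                rw [← hK] at this
                linarith
              have hmin : min ((R : ℝ) * x - d) 1 = 1 := min_eq_right (by linarith)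
              rw [hmin, hμ1, hν1]
              simp
            · have hneg : min ((R : ℝ) * x - d) 1 < 0 := by
                apply lt_of_le_of_lt (min_le_left _ _)
                linarith [not_le.mp hle]
              rw [Set.Icc_eq_empty (by linarith : ¬ (0:ℝ) ≤ min ((R : ℝ) * x - d) 1)]
              simp
      _ ≤ δ := by
          rw [Finset.sum_ite_eq' D K (fun _ => δ)]
          split <;> simp [hδ]
  calc ((D.card : ℝ))⁻¹ * |∑ d ∈ D, _| ≤ ((D.card : ℝ))⁻¹ * δ := by
        apply mul_le_mul_of_nonneg_left hsum (by positivity)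
    _ ≤ δ / 2 := by
        rw [div_eq_mul_inv, mul_comm]
        apply mul_le_mul_of_nonneg_left _ hδ
        apply inv_anti₀ (by norm_num)
        exact_mod_cast hcard


lemma kron_injOn (R₂ : ℕ) (D₁ D₂ : Finset ℕ) (hD₂ : D₂ ⊆ Finset.range R₂) :
    Set.InjOn (fun p : ℕ × ℕ => p.2 + p.1 * R₂) ↑(D₁ ×ˢ D₂) := by
  rintro ⟨a₁, a₂⟩ ha ⟨b₁, b₂⟩ hb hab
  rw [Finset.mem_coe, Finset.mem_product] at ha hb
  have ha2 : a₂ < R₂ := Finset.mem_range.mp (hD₂ ha.2)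
  have hb2 : b₂ < R₂ := Finset.mem_range.mp (hD₂ hb.2)
  dsimp only at hab
  have h2 : a₂ = b₂ := by
    have h := congrArg (· % R₂) hab
    simpa [Nat.add_mul_mod_self_right, Nat.mod_eq_of_lt ha2, Nat.mod_eq_of_lt hb2] using h
  subst h2
  have hR : 0 < R₂ := lt_of_le_of_lt (Nat.zero_le _) ha2
  have h1 : a₁ = b₁ :=
    Nat.eq_of_mul_eq_mul_right hR (Nat.add_left_cancel hab)
  simp [h1]

lemma ifsOp_comp (R₁ R₂ : ℕ) (hR₁ : 0 < R₁) (hR₂ : 0 < R₂) (D₁ D₂ : Finset ℕ)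
    (hD₂ : D₂ ⊆ Finset.range R₂) (μ : Measure ℝ) :
    ifsOp R₁ D₁ (ifsOp R₂ D₂ μ) = ifsOp (R₁ * R₂) (kronDigitSet R₂ D₁ D₂) μ := by
  ext s hs
  rw [ifsOp_apply _ _ _ hs, ifsOp_apply _ _ _ hs]
  have hcomp : ∀ d₁ d₂ : ℕ,
      ((fun x : ℝ => (x + (d₂ : ℝ)) / (R₂ : ℕ)) ⁻¹'
        ((fun x : ℝ => (x + (d₁ : ℝ)) / (R₁ : ℕ)) ⁻¹' s)) =
      ((fun x : ℝ => (x + ((d₂ + d₁ * R₂ : ℕ) : ℝ)) / ((R₁ * R₂ : ℕ) : ℕ)) ⁻¹' s) := by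
    intro d₁ d₂
    have h1 : ((R₁ : ℕ) : ℝ) ≠ 0 := by exact_mod_cast hR₁.ne'
    have h2 : ((R₂ : ℕ) : ℝ) ≠ 0 := by exact_mod_cast hR₂.ne'
    have hfun : ∀ y : ℝ, ((y + (d₂ : ℝ)) / (R₂ : ℕ) + (d₁ : ℝ)) / (R₁ : ℕ) =
        (y + ((d₂ + d₁ * R₂ : ℕ) : ℝ)) / ((R₁ * R₂ : ℕ) : ℕ) := by
      intro y
      push_cast
      field_simp
      ring
    ext y
    simp only [Set.mem_preimage, hfun y]
  have hinner : ∀ d₁ ∈ D₁, (ifsOp R₂ D₂ μ) ((fun x : ℝ => (x + (d₁ : ℝ)) / (R₁ : ℕ)) ⁻¹' s) =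
      (D₂.card : ℝ≥0∞)⁻¹ * ∑ d₂ ∈ D₂,
        μ ((fun x : ℝ => (x + ((d₂ + d₁ * R₂ : ℕ) : ℝ)) / ((R₁ * R₂ : ℕ) : ℕ)) ⁻¹' s) := by
    intro d₁ _
    rw [ifsOp_apply _ _ _ ((ifs_meas R₁ d₁) hs)]
    congr 1
    exact Finset.sum_congr rfl fun d₂ _ => by rw [hcomp d₁ d₂]
  rw [Finset.sum_congr rfl hinner]
  rw [kronDigitSet, Finset.card_image_of_injOn (kron_injOn R₂ D₁ D₂ hD₂),
    Finset.sum_image (fun p hp q hq hpq => kron_injOn R₂ D₁ D₂ hD₂ hp hq hpq)]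
  rw [Finset.card_product, Finset.sum_product]
  simp only [Finset.mul_sum, ← mul_assoc]
  rw [Finset.sum_congr rfl (fun d₁ _ => rfl)]
  congr 1
  · push_cast
    rw [ENNReal.mul_inv (by simp) (by simp), mul_comm]


lemma eq_of_le_halfpow {a b : ℝ} (h : ∀ n : ℕ, |a - b| ≤ 2 * (1/2:ℝ)^n) : a = b := by
  by_contra hne
  have hpos : 0 < |a - b| / 2 := by
    have := abs_pos.mpr (sub_ne_zero.mpr hne); linarith
  obtain ⟨n, hn⟩ := exists_pow_lt_of_lt_one hpos (by norm_num : (1/2:ℝ) < 1)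
  have := h n
  have h2 : 2 * (1/2:ℝ)^n < |a - b| := by linarith
  linarith

lemma cdf_abs_le_one (ρ τ : Measure ℝ) [IsProbabilityMeasure ρ] [IsProbabilityMeasure τ]
    (y : ℝ) : |(ρ (Set.Icc 0 y)).toReal - (τ (Set.Icc 0 y)).toReal| ≤ 1 := by
  have h1 : (ρ (Set.Icc 0 y)).toReal ≤ 1 := by
    simpa using ENNReal.toReal_mono ENNReal.one_ne_top (prob_le_one (μ := ρ))
  have h2 : (τ (Set.Icc 0 y)).toReal ≤ 1 := by
    simpa using ENNReal.toReal_mono ENNReal.one_ne_top (prob_le_one (μ := τ))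
  have h3 : 0 ≤ (ρ (Set.Icc 0 y)).toReal := ENNReal.toReal_nonneg
  have h4 : 0 ≤ (τ (Set.Icc 0 y)).toReal := ENNReal.toReal_nonneg
  rw [abs_sub_le_iff]
  constructor <;> linarith

theorem commuting_kron_implies_equal_cdfs
    (N L M : ℕ) (hN : 2 ≤ N) (hL : 1 ≤ L) (hM : 1 ≤ M)
    (D₁ D₂ : Finset ℕ)
    (hD₁ : D₁ ⊆ Finset.range (N ^ L)) (hD₂ : D₂ ⊆ Finset.range (N ^ M))
    (hD₁card : 2 ≤ D₁.card) (hD₁card' : D₁.card ≤ N ^ L - 1)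
    (hD₂card : 2 ≤ D₂.card) (hD₂card' : D₂.card ≤ N ^ M - 1)
    (hcomm : kronDigitSet (N ^ M) D₁ D₂ = kronDigitSet (N ^ L) D₂ D₁)
    (μ ν : Measure ℝ) [IsProbabilityMeasure μ] [IsProbabilityMeasure ν]
    (hμsupp : μ (Set.Icc 0 1) = 1)
    (hμinv : μ = (D₁.card : ℝ≥0∞)⁻¹ •
        ∑ d ∈ D₁, μ.map (fun x : ℝ => (x + (d : ℝ)) / (N ^ L : ℕ)))
    (hνsupp : ν (Set.Icc 0 1) = 1)
    (hνinv : ν = (D₂.card : ℝ≥0∞)⁻¹ •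
        ∑ d ∈ D₂, ν.map (fun x : ℝ => (x + (d : ℝ)) / (N ^ M : ℕ))) :
    ∀ x : ℝ, (μ (Set.Icc 0 x)).toReal = (ν (Set.Icc 0 x)).toReal := by
  have hR₁ : 0 < N ^ L := pow_pos (by omega) L
  have hR₂ : 0 < N ^ M := pow_pos (by omega) M
  have hD₂ne : D₂.Nonempty := Finset.card_pos.mp (by omega)
  have hμfix : ifsOp (N ^ L) D₁ μ = μ := by rw [ifsOp]; exact hμinv.symm
  have hνfix : ifsOp (N ^ M) D₂ ν = ν := by rw [ifsOp]; exact hνinv.symm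
  have hSS : ∀ ρ : Measure ℝ,
      ifsOp (N ^ L) D₁ (ifsOp (N ^ M) D₂ ρ) = ifsOp (N ^ M) D₂ (ifsOp (N ^ L) D₁ ρ) := by
    intro ρ
    rw [ifsOp_comp _ _ hR₁ hR₂ D₁ D₂ hD₂ ρ, ifsOp_comp _ _ hR₂ hR₁ D₂ D₁ hD₁ ρ, hcomm,
      Nat.mul_comm (N ^ L) (N ^ M)]
  set seq : ℕ → Measure ℝ := fun n => (ifsOp (N ^ M) D₂)^[n] μ with hseq
  have hseq_succ : ∀ n, seq (n + 1) = ifsOp (N ^ M) D₂ (seq n) := fun n =>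
    Function.iterate_succ_apply' _ _ _
  have hprop : ∀ n, IsProbabilityMeasure (seq n) ∧ seq n (Set.Icc 0 1) = 1 ∧
      ifsOp (N ^ L) D₁ (seq n) = seq n := by
    intro n
    induction n with
    | zero => exact ⟨‹_›, hμsupp, hμfix⟩
    | succ n ih =>
      obtain ⟨h1, h2, h3⟩ := ih
      haveI := h1
      rw [hseq_succ]
      refine ⟨ifsOp_prob _ _ hD₂ne _, ifsOp_supp _ hR₂ _ hD₂ hD₂ne _ h2, ?_⟩
      rw [hSS, h3]
  have hA : ∀ n k, ∀ y : ℝ,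
      |((seq n) (Set.Icc 0 y)).toReal - (μ (Set.Icc 0 y)).toReal| ≤ (1/2:ℝ)^k := by
    intro n k
    induction k with
    | zero =>
      intro y
      haveI := (hprop n).1
      simpa using cdf_abs_le_one (seq n) μ y
    | succ k ih =>
      intro y
      haveI := (hprop n).1
      have hc := ifsOp_contract (N ^ L) hR₁ D₁ hD₁ hD₁card (seq n) μ (hprop n).2.1 hμsupp
        ((1/2:ℝ)^k) (by positivity) ih y
      rw [(hprop n).2.2, hμfix] at hc
      calc |((seq n) (Set.Icc 0 y)).toReal - (μ (Set.Icc 0 y)).toReal| ≤ (1/2:ℝ)^k / 2 := hc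
        _ = (1/2:ℝ)^(k+1) := by ring
  have hA0 : ∀ n, ∀ y : ℝ, ((seq n) (Set.Icc 0 y)).toReal = (μ (Set.Icc 0 y)).toReal := by
    intro n y
    apply eq_of_le_halfpow
    intro k
    have := hA n k y
    have hp : (0:ℝ) ≤ (1/2:ℝ)^k := by positivity
    linarith
  have hB : ∀ n, ∀ y : ℝ,
      |((seq n) (Set.Icc 0 y)).toReal - (ν (Set.Icc 0 y)).toReal| ≤ (1/2:ℝ)^n := by
    intro n
    induction n with
    | zero =>
      intro y
      rw [show seq 0 = μ from rfl]
      simpa using cdf_abs_le_one μ ν y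
    | succ n ih =>
      intro y
      haveI := (hprop n).1
      have hc := ifsOp_contract (N ^ M) hR₂ D₂ hD₂ hD₂card (seq n) ν (hprop n).2.1 hνsupp
        ((1/2:ℝ)^n) (by positivity) ih y
      rw [hνfix, ← hseq_succ] at hc
      calc |((seq (n+1)) (Set.Icc 0 y)).toReal - (ν (Set.Icc 0 y)).toReal| ≤ (1/2:ℝ)^n / 2 := hc
        _ = (1/2:ℝ)^(n+1) := by ring
  intro x
  apply eq_of_le_halfpow
  intro n
  have h1 := hB n x
  have h2 := hA0 n x
  rw [h2] at h1
  have hp : (0:ℝ) ≤ (1/2:ℝ)^n := by positivity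
  linarith
end

section
/- For any digit set D = {ε_0,...,ε_{d-1}} ⊆ {0,...,N-1} with d ≥ 2, any real t and any j, the averaged exponential sum satisfies |(1/d) Σ_{k=0}^{d-1} e^{2πi(t/N^j)ε_k}| ≤ |cos(π t |ε_a - ε_b| / N^j)|, where ε_a, ε_b are distinct elements of D maximizing |e^{2πi(t/N^j)ε_l} + e^{2πi(t/N^j)ε_m}| over distinct pairs l ≠ m. -/
open Complex Real

private theorem pair_abs' (u v : ℝ) :
    ‖Complex.exp (u * I) + Complex.exp (v * I)‖
      = 2 * |Real.cos ((u - v) / 2)| := by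
  have h : Complex.exp (↑u * I) + Complex.exp (↑v * I)
      = Complex.exp ((↑((u+v)/2) : ℂ) * I) * (2 * Real.cos ((u - v)/2)) := by
    rw [Complex.ofReal_cos]
    rw [show ((u:ℂ) * I) = ((((u+v)/2 : ℝ)) : ℂ) * I + (((u-v)/2 : ℝ) : ℂ) * I by push_cast; ring,
        show ((v:ℂ) * I) = ((((u+v)/2 : ℝ)) : ℂ) * I + ((-((u-v)/2) : ℝ) : ℂ) * I by push_cast; ring,
        Complex.exp_add, Complex.exp_add, Complex.exp_mul_I, Complex.exp_mul_I]
    push_cast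
    rw [Complex.exp_mul_I, Complex.cos_neg, Complex.sin_neg]
    ring
  rw [h, norm_mul, Complex.norm_exp_ofReal_mul_I, one_mul, norm_mul, Complex.norm_two,
    Complex.norm_real, Real.norm_eq_abs]

theorem exponential_sum_cosine_bound
    (N : ℕ) (j : ℕ) (t : ℝ)
    (D : Finset ℤ) (hD : ∀ x ∈ D, 0 ≤ x ∧ x < (N : ℤ))
    (hcard : 2 ≤ D.card)
    (a b : ℤ) (ha : a ∈ D) (hb : b ∈ D) (hab : a ≠ b)
    (hmax : ∀ l ∈ D, ∀ m ∈ D, l ≠ m →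
      ‖(Complex.exp (2 * Real.pi * Complex.I * (t / (N : ℝ) ^ j) * (l : ℂ))
          + Complex.exp (2 * Real.pi * Complex.I * (t / (N : ℝ) ^ j) * (m : ℂ)))‖
        ≤ ‖(Complex.exp (2 * Real.pi * Complex.I * (t / (N : ℝ) ^ j) * (a : ℂ))
          + Complex.exp (2 * Real.pi * Complex.I * (t / (N : ℝ) ^ j) * (b : ℂ)))‖) :
    ‖((1 / (D.card : ℂ)) *
        ∑ k ∈ D, Complex.exp (2 * Real.pi * Complex.I * (t / (N : ℝ) ^ j) * (k : ℂ)))‖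
      ≤ |Real.cos (Real.pi * t * |((a : ℝ) - (b : ℝ))| / (N : ℝ) ^ j)| := by
  set f : ℤ → ℂ :=
    fun k => Complex.exp (2 * Real.pi * Complex.I * (t / (N : ℝ) ^ j) * (k : ℂ)) with hfdef
  set θ : ℤ → ℝ := fun k => 2 * Real.pi * (t / (N : ℝ) ^ j) * k with hθdef
  have hf : ∀ k : ℤ, f k = Complex.exp ((θ k : ℂ) * I) := by
    intro k
    simp only [hfdef, hθdef]
    congr 1
    push_cast
    ring
  set C : ℝ := |Real.cos (Real.pi * t * |((a : ℝ) - (b : ℝ))| / (N : ℝ) ^ j)| with hCdef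
  have hC0 : 0 ≤ C := abs_nonneg _
  -- the maximal pair value
  have hM : ‖f a + f b‖ = 2 * C := by
    rw [hf a, hf b, pair_abs']
    congr 1
    have h1 : (θ a - θ b) / 2 = Real.pi * t * ((a : ℝ) - b) / (N : ℝ) ^ j := by
      simp only [hθdef]; ring
    rw [h1, hCdef]
    rcases abs_choice ((a : ℝ) - b) with h | h
    · rw [h]
    · rw [h, show Real.pi * t * (-((a:ℝ) - b)) / (N:ℝ)^j
          = -(Real.pi * t * ((a:ℝ) - b) / (N:ℝ)^j) by ring, Real.cos_neg]
  set S : ℂ := ∑ k ∈ D, f k with hSdef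
  set d : ℕ := D.card with hddef
  have hd1 : (1 : ℕ) ≤ d := le_trans (by norm_num) hcard
  -- key identity
  have key : (2 * (d : ℂ) - 2) * S = ∑ k ∈ D, ∑ l ∈ D.erase k, (f k + f l) := by
    have : ∀ k ∈ D, ∑ l ∈ D.erase k, (f k + f l)
        = ((d : ℂ) - 1) * f k + (S - f k) := by
      intro k hk
      rw [Finset.sum_add_distrib, Finset.sum_const, Finset.card_erase_of_mem hk,
        Finset.sum_erase_eq_sub hk, nsmul_eq_mul, Nat.cast_sub hd1, Nat.cast_one]
    rw [Finset.sum_congr rfl this, Finset.sum_add_distrib, ← Finset.mul_sum, ← hSdef,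
      Finset.sum_sub_distrib, ← hSdef, Finset.sum_const, ← hddef, nsmul_eq_mul]
    ring
  -- bound on double sum
  have hbound : ‖(2 * (d : ℂ) - 2) * S‖ ≤ (d : ℝ) * ((d : ℝ) - 1) * (2 * C) := by
    rw [key]
    calc ‖∑ k ∈ D, ∑ l ∈ D.erase k, (f k + f l)‖
        ≤ ∑ k ∈ D, ∑ l ∈ D.erase k, ‖f k + f l‖ := by
          refine le_trans (norm_sum_le _ _) ?_
          exact Finset.sum_le_sum fun k hk => norm_sum_le _ _
      _ ≤ ∑ k ∈ D, ∑ l ∈ D.erase k, (2 * C) := by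
          refine Finset.sum_le_sum fun k hk => Finset.sum_le_sum fun l hl => ?_
          have hlk : l ≠ k := Finset.ne_of_mem_erase hl
          have hlD : l ∈ D := Finset.mem_of_mem_erase hl
          have := hmax k hk l hlD (Ne.symm hlk)
          rw [hM] at this
          exact this
      _ = (d : ℝ) * ((d : ℝ) - 1) * (2 * C) := by
          simp only [Finset.sum_const, nsmul_eq_mul]
          rw [Finset.sum_congr rfl fun k hk => by
            rw [Finset.card_erase_of_mem hk]]
          rw [Finset.sum_const, nsmul_eq_mul, ← hddef, Nat.cast_sub hd1]
          push_cast
          ring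
  have habs2 : ‖(2 * (d : ℂ) - 2) * S‖
      = (2 * (d : ℝ) - 2) * ‖S‖ := by
    rw [norm_mul]
    congr 1
    rw [show (2 * (d : ℂ) - 2) = ((2 * (d : ℝ) - 2 : ℝ) : ℂ) by push_cast; ring,
      Complex.norm_real, Real.norm_eq_abs, _root_.abs_of_nonneg]
    have : (2 : ℝ) ≤ (d : ℝ) := by exact_mod_cast hcard
    linarith
  rw [habs2] at hbound
  -- finish
  have hdr : (2 : ℝ) ≤ (d : ℝ) := by exact_mod_cast hcard
  have hgoal : ‖(1 / (d : ℂ)) * S‖ = ‖S‖ / (d : ℝ) := by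
    rw [norm_mul, norm_div, norm_one, Complex.norm_natCast]
    ring
  rw [hgoal]
  rw [div_le_iff₀ (by linarith : (0 : ℝ) < (d : ℝ))]
  nlinarith [norm_nonneg S]
end
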